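/- Let K be an n×n Hermitian positive-definite matrix and K' the matrix of entrywise absolute values of K. If K' is irreducible and there exists a cycle a_0, a_1, ..., a_m = a_0 (with a_l ≠ a_{l+1} and K_{a_l a_{l+1}} ≠ 0) such that the product K_{a_0 a_1} K_{a_1 a_2} ··· K_{a_{m-1} a_0} is not a positive real number, then the largest eigenvalue of K' is strictly greater than the largest eigenvalue of K. -/

import Mathlib

open Matrix
open scoped ComplexOrder

lemma aux_quad {n : ℕ} {A : Matrix (Fin n) (Fin n) ℝ} (hA : A.IsHermitian) (w : Fin n → ℝ)
    (μ : ℝ) (hμ : ∀ i, hA.eigenvalues i ≤ μ) :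
    w ⬝ᵥ (A *ᵥ w) ≤ μ * (w ⬝ᵥ w) ∧ (w ⬝ᵥ (A *ᵥ w) = μ * (w ⬝ᵥ w) → A *ᵥ w = μ • w) := by
  classical
  set U : Matrix (Fin n) (Fin n) ℝ := ↑hA.eigenvectorUnitary with hUdef
  have hU1 : U * star U = 1 := (Matrix.mem_unitaryGroup_iff).mp hA.eigenvectorUnitary.2
  set y : Fin n → ℝ := star U *ᵥ w with hydef
  have hstarU : star U = Uᵀ := by
    rw [Matrix.star_eq_conjTranspose, Matrix.conjTranspose_eq_transpose_of_trivial]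
  have key : ∀ v : Fin n → ℝ, w ⬝ᵥ (U *ᵥ v) = y ⬝ᵥ v := by
    intro v
    rw [dotProduct_mulVec, hydef, hstarU]
    congr 1
    rw [← Matrix.transpose_transpose U, Matrix.vecMul_transpose, Matrix.transpose_transpose]
  have hUy : U *ᵥ y = w := by
    rw [hydef, Matrix.mulVec_mulVec, hU1, Matrix.one_mulVec]
  have hww : w ⬝ᵥ w = y ⬝ᵥ y := by
    calc w ⬝ᵥ w = w ⬝ᵥ (U *ᵥ y) := by rw [hUy]
    _ = y ⬝ᵥ y := key y
  set D : Matrix (Fin n) (Fin n) ℝ := diagonal hA.eigenvalues with hDdef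
  have hDdiag : diagonal (RCLike.ofReal ∘ hA.eigenvalues) = D := by
    rw [hDdef]; congr 1
  have hAw : A *ᵥ w = U *ᵥ (D *ᵥ y) := by
    conv_lhs => rw [hA.spectral_theorem]
    rw [hDdiag, Matrix.mulVec_mulVec, Matrix.mulVec_mulVec]
    rw [Unitary.conjStarAlgAut_apply]
  have hDy : D *ᵥ y = fun i => hA.eigenvalues i * y i := by
    funext i
    simp [hDdef, Matrix.mulVec_diagonal]
  have hquad : w ⬝ᵥ (A *ᵥ w) = ∑ i, hA.eigenvalues i * y i ^ 2 := by
    rw [hAw, key, hDy, dotProduct]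
    congr 1; funext i; ring
  have hterm : ∀ i ∈ Finset.univ, hA.eigenvalues i * y i ^ 2 ≤ μ * y i ^ 2 := by
    intro i _
    exact mul_le_mul_of_nonneg_right (hμ i) (sq_nonneg _)
  have hyy : y ⬝ᵥ y = ∑ i, y i ^ 2 := by
    rw [dotProduct]; congr 1; funext i; ring
  constructor
  · rw [hquad, hww, hyy, Finset.mul_sum]
    exact Finset.sum_le_sum hterm
  · intro heq
    rw [hquad, hww, hyy, Finset.mul_sum] at heq
    have := (Finset.sum_eq_sum_iff_of_le hterm).mp heq
    have heach : ∀ i, hA.eigenvalues i * y i = μ * y i := by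
      intro i
      rcases eq_or_ne (y i) 0 with h0 | h0
      · rw [h0, mul_zero, mul_zero]
      · have h1 := this i (Finset.mem_univ i)
        have h2 : (0:ℝ) < y i ^ 2 := by positivity
        have h3 : (μ - hA.eigenvalues i) * y i ^ 2 = 0 := by linarith
        rcases mul_eq_zero.mp h3 with h | h
        · have : μ = hA.eigenvalues i := by linarith
          rw [this]
        · exact absurd h (ne_of_gt h2)
    have hDy2 : D *ᵥ y = μ • y := by
      rw [hDy]; funext i; simp [heach i]
    rw [hAw, hDy2, Matrix.mulVec_smul, hUy]

theorem strict_diamagnetic_inequality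
    (n : ℕ) (hn : 0 < n)
    (K : Matrix (Fin n) (Fin n) ℂ) (hK : K.PosDef)
    (K' : Matrix (Fin n) (Fin n) ℝ) (hK' : K'.IsHermitian)
    (habs : ∀ a b, K' a b = ‖K a b‖)
    (hirr : ∀ a b, ∃ p : ℕ, 0 < (K' ^ p) a b)
    (hcycle : ∃ (m : ℕ) (α : ℕ → Fin n), 0 < m ∧ α m = α 0 ∧
      (∀ l < m, α l ≠ α (l + 1)) ∧ (∀ l < m, K (α l) (α (l + 1)) ≠ 0) ∧
      ¬ ∃ r : ℝ, 0 < r ∧ (∏ l ∈ Finset.range m, K (α l) (α (l + 1))) = (r : ℂ)) :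
    haveI : Nonempty (Fin n) := Fin.pos_iff_nonempty.mp hn
    (⨆ i, hK.1.eigenvalues i) < ⨆ i, hK'.eigenvalues i := by
  classical
  haveI : Nonempty (Fin n) := Fin.pos_iff_nonempty.mp hn
  show (⨆ i, hK.1.eigenvalues i) < ⨆ i, hK'.eigenvalues i
  set lam' : ℝ := ⨆ i, hK'.eigenvalues i with hlam'def
  have hμ : ∀ i, hK'.eigenvalues i ≤ lam' := fun i => le_ciSup (Finite.bddAbove_range _) i
  obtain ⟨i0, hi0⟩ := Finite.exists_max (hK.1.eigenvalues)
  have hsup : (⨆ i, hK.1.eigenvalues i) = hK.1.eigenvalues i0 :=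
    le_antisymm (ciSup_le hi0) (le_ciSup (Finite.bddAbove_range _) i0)
  rw [hsup]
  set lam : ℝ := hK.1.eigenvalues i0 with hlamdef
  have hlampos : 0 < lam := hK.eigenvalues_pos i0
  set u : Fin n → ℂ := ⇑(hK.1.eigenvectorBasis i0) with hudef
  have heig : K *ᵥ u = lam • u := hK.1.mulVec_eigenvectorBasis i0
  have hu0 : u ≠ 0 := by
    intro h
    apply hK.1.eigenvectorBasis.orthonormal.ne_zero i0
    ext a
    exact congrFun h a
  set w : Fin n → ℝ := fun a => ‖u a‖ with hwdef
  have hwnn : ∀ a, 0 ≤ w a := fun a => norm_nonneg _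
  obtain ⟨b0, hb0⟩ : ∃ a, u a ≠ 0 := Function.ne_iff.mp hu0
  have hwb0 : 0 < w b0 := by
    simp only [hwdef]
    exact norm_pos_iff.mpr hb0
  have hs : 0 < w ⬝ᵥ w := by
    rw [dotProduct]
    apply Finset.sum_pos' (fun a _ => mul_nonneg (hwnn a) (hwnn a))
    exact ⟨b0, Finset.mem_univ b0, mul_pos hwb0 hwb0⟩
  -- lower identity
  have hlow : (star u ⬝ᵥ (K *ᵥ u)).re = lam * (w ⬝ᵥ w) := by
    rw [heig, dotProduct, dotProduct, Finset.mul_sum, Complex.re_sum]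
    congr 1
    funext a
    simp only [Pi.smul_apply, Pi.star_apply, Complex.real_smul]
    rw [show (star (u a)) * ((lam : ℂ) * u a) = (lam:ℂ) * (u a * star (u a)) by ring]
    rw [RCLike.star_def, Complex.mul_conj, ← Complex.ofReal_mul, Complex.ofReal_re,
      Complex.normSq_eq_norm_sq]
    simp only [hwdef]
    ring
  have hdouble : (star u ⬝ᵥ (K *ᵥ u)).re
      = ∑ a, ∑ b, ((starRingEnd ℂ) (u a) * (K a b * u b)).re := by
    rw [dotProduct, Complex.re_sum]
    congr 1
    funext a
    rw [Matrix.mulVec, dotProduct, Pi.star_apply, RCLike.star_def, Finset.mul_sum,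
      Complex.re_sum]
  have hbound : ∀ a b, ((starRingEnd ℂ) (u a) * (K a b * u b)).re ≤ K' a b * (w a * w b) := by
    intro a b
    calc ((starRingEnd ℂ) (u a) * (K a b * u b)).re
        ≤ ‖(starRingEnd ℂ) (u a) * (K a b * u b)‖ := Complex.re_le_norm _
      _ = K' a b * (w a * w b) := by
          rw [habs, norm_mul, norm_mul, Complex.norm_conj, hwdef]
          ring
  have hup : (∑ a, ∑ b, K' a b * (w a * w b)) = w ⬝ᵥ (K' *ᵥ w) := by
    rw [dotProduct]
    congr 1
    funext a
    rw [Matrix.mulVec, dotProduct, Finset.mul_sum]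
    congr 1
    funext b
    ring
  obtain ⟨hquad_le, hquad_eq⟩ := aux_quad hK' w lam' hμ
  have hsums : (∑ a, ∑ b, ((starRingEnd ℂ) (u a) * (K a b * u b)).re)
      ≤ ∑ a, ∑ b, K' a b * (w a * w b) :=
    Finset.sum_le_sum fun a _ => Finset.sum_le_sum fun b _ => hbound a b
  have hle : lam ≤ lam' := by
    have h1 : lam * (w ⬝ᵥ w) ≤ lam' * (w ⬝ᵥ w) := by
      rw [← hlow, hdouble]
      calc _ ≤ ∑ a, ∑ b, K' a b * (w a * w b) := hsums
        _ = w ⬝ᵥ (K' *ᵥ w) := hup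
        _ ≤ lam' * (w ⬝ᵥ w) := hquad_le
    exact le_of_mul_le_mul_right h1 hs
  rcases lt_or_eq_of_le hle with h | hEq
  · exact h
  exfalso
  -- equality throughout
  have hqeq : w ⬝ᵥ (K' *ᵥ w) = lam' * (w ⬝ᵥ w) := by
    have h1 : lam * (w ⬝ᵥ w) ≤ w ⬝ᵥ (K' *ᵥ w) := by
      rw [← hlow, hdouble, ← hup]; exact hsums
    have h2 : w ⬝ᵥ (K' *ᵥ w) ≤ lam' * (w ⬝ᵥ w) := hquad_le
    rw [← hEq] at h2 ⊢
    linarith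
  have hKw : K' *ᵥ w = lam' • w := hquad_eq hqeq
  have hsum_eq : (∑ a, ∑ b, ((starRingEnd ℂ) (u a) * (K a b * u b)).re)
      = ∑ a, ∑ b, K' a b * (w a * w b) := by
    rw [hup, hqeq, ← hEq, ← hlow, hdouble]
  have hterm_eq : ∀ a b, ((starRingEnd ℂ) (u a) * (K a b * u b)).re = K' a b * (w a * w b) := by
    have houter := (Finset.sum_eq_sum_iff_of_le
      (fun a (_ : a ∈ Finset.univ) => Finset.sum_le_sum fun b _ => hbound a b)).mp hsum_eq
    intro a b
    exact (Finset.sum_eq_sum_iff_of_le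
      (fun b (_ : b ∈ Finset.univ) => hbound a b)).mp (houter a (Finset.mem_univ a)) b
      (Finset.mem_univ b)
  -- positivity of w
  have hlam'pos : 0 < lam' := hEq ▸ hlampos
  have hK'nn : ∀ (p : ℕ) a b, 0 ≤ (K' ^ p) a b := by
    intro p
    induction p with
    | zero =>
      intro a b
      rw [pow_zero]
      by_cases h : a = b <;> simp [Matrix.one_apply, h]
    | succ p ih =>
      intro a b
      rw [pow_succ, Matrix.mul_apply]
      exact Finset.sum_nonneg fun c _ => mul_nonneg (ih a c) (by rw [habs]; exact norm_nonneg _)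
  have hKpw : ∀ p : ℕ, (K' ^ p) *ᵥ w = (lam' ^ p) • w := by
    intro p
    induction p with
    | zero => simp
    | succ p ih =>
      rw [pow_succ, ← Matrix.mulVec_mulVec, hKw, Matrix.mulVec_smul, ih, pow_succ,
        smul_smul, mul_comm lam']
  have hwpos : ∀ a, 0 < w a := by
    intro a
    obtain ⟨p, hp⟩ := hirr a b0
    have hrow := congrFun (hKpw p) a
    simp only [Matrix.mulVec, dotProduct, Pi.smul_apply, smul_eq_mul] at hrow
    have hlhs : 0 < ∑ c, (K' ^ p) a c * w c := by
      apply Finset.sum_pos' (fun c _ => mul_nonneg (hK'nn p a c) (hwnn c))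
      exact ⟨b0, Finset.mem_univ b0, mul_pos hp hwb0⟩
    rw [hrow] at hlhs
    have : 0 < lam' ^ p := pow_pos hlam'pos p
    nlinarith [hwnn a]
  have hune : ∀ a, u a ≠ 0 := by
    intro a h
    have := hwpos a
    rw [hwdef] at this
    simp only [h, map_zero, norm_zero] at this
    exact lt_irrefl 0 this
  -- phase identity
  have hphase : ∀ a b, K a b = ((K' a b / (w a * w b) : ℝ) : ℂ) * (u a * (starRingEnd ℂ) (u b)) := by
    intro a b
    have hz := hterm_eq a b
    set z : ℂ := (starRingEnd ℂ) (u a) * (K a b * u b) with hzdef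
    have habsz : ‖z‖ = K' a b * (w a * w b) := by
      rw [hzdef, norm_mul, norm_mul, Complex.norm_conj, habs, hwdef]
      ring
    have hrez : z.re = ‖z‖ := by rw [habsz, hz]
    have himz : z.im = 0 := by
      have h1 : ‖z‖ ^ 2 = z.re ^ 2 + z.im ^ 2 := by
        rw [Complex.sq_norm, Complex.normSq_apply]; ring
      rw [← hrez] at h1
      have : z.im ^ 2 = 0 := by linarith
      exact (pow_eq_zero_iff two_ne_zero).mp this
    have hzeq : z = ((K' a b * (w a * w b) : ℝ) : ℂ) := by
      apply Complex.ext
      · rw [hrez, habsz]; simp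
      · rw [himz]; simp
    -- now solve for K a b
    have hca : (starRingEnd ℂ) (u a) ≠ 0 := by
      simpa using hune a
    have hub : u b ≠ 0 := hune b
    have hwa : (w a : ℝ) ≠ 0 := ne_of_gt (hwpos a)
    have hwb : (w b : ℝ) ≠ 0 := ne_of_gt (hwpos b)
    apply mul_left_cancel₀ hca
    apply mul_right_cancel₀ hub
    calc (starRingEnd ℂ) (u a) * K a b * u b = z := by rw [hzdef]; ring
      _ = (starRingEnd ℂ) (u a) * (((K' a b / (w a * w b) : ℝ) : ℂ) * (u a * (starRingEnd ℂ) (u b))) * u b := by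
          rw [hzeq]
          have h1 : (starRingEnd ℂ) (u a) * u a = ((w a ^ 2 : ℝ) : ℂ) := by
            rw [mul_comm, Complex.mul_conj, hwdef, Complex.normSq_eq_norm_sq]
          have h2 : (starRingEnd ℂ) (u b) * u b = ((w b ^ 2 : ℝ) : ℂ) := by
            rw [mul_comm, Complex.mul_conj, hwdef, Complex.normSq_eq_norm_sq]
          rw [show (starRingEnd ℂ) (u a) * (((K' a b / (w a * w b) : ℝ) : ℂ) * (u a * (starRingEnd ℂ) (u b))) * u b
              = ((K' a b / (w a * w b) : ℝ) : ℂ) * ((starRingEnd ℂ) (u a) * u a) * ((starRingEnd ℂ) (u b) * u b) by ring,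
            h1, h2]
          push_cast
          field_simp
  -- the cycle contradiction
  obtain ⟨m, α, hm, hαm, hne, hKne, hnR⟩ := hcycle
  apply hnR
  set P : ℂ := ∏ l ∈ Finset.range m, u (α l) with hPdef
  have hPne : P ≠ 0 := Finset.prod_ne_zero_iff.mpr fun l _ => hune (α l)
  have hshift : (∏ l ∈ Finset.range m, u (α (l + 1))) = P := by
    have h1 := Finset.prod_range_succ' (fun l => u (α l)) m
    have h2 := Finset.prod_range_succ (fun l => u (α l)) m
    rw [h1] at h2
    simp only [hαm] at h2
    exact mul_right_cancel₀ (hune (α 0)) h2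
  set c : ℕ → ℝ := fun l => K' (α l) (α (l + 1)) / (w (α l) * w (α (l + 1))) with hcdef
  have hcpos : ∀ l < m, 0 < c l := by
    intro l hl
    have hKl : 0 < K' (α l) (α (l + 1)) := by
      rw [habs]
      exact norm_pos_iff.mpr (hKne l hl)
    exact div_pos hKl (mul_pos (hwpos _) (hwpos _))
  refine ⟨(∏ l ∈ Finset.range m, c l) * Complex.normSq P, ?_, ?_⟩
  · apply mul_pos
    · exact Finset.prod_pos fun l hl => hcpos l (Finset.mem_range.mp hl)
    · exact Complex.normSq_pos.mpr hPne
  · calc (∏ l ∈ Finset.range m, K (α l) (α (l + 1)))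
        = ∏ l ∈ Finset.range m, (((c l : ℝ) : ℂ) * (u (α l) * (starRingEnd ℂ) (u (α (l + 1))))) := by
          exact Finset.prod_congr rfl fun l _ => hphase (α l) (α (l + 1))
      _ = ((∏ l ∈ Finset.range m, c l : ℝ) : ℂ) * ((∏ l ∈ Finset.range m, u (α l))
            * (starRingEnd ℂ) (∏ l ∈ Finset.range m, u (α (l + 1)))) := by
          rw [Finset.prod_mul_distrib, Finset.prod_mul_distrib, ← _root_.map_prod]
          push_cast
          ring
      _ = ((∏ l ∈ Finset.range m, c l : ℝ) : ℂ) * ((Complex.normSq P : ℝ) : ℂ) := by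
          rw [hshift, ← hPdef, Complex.mul_conj]
      _ = (((∏ l ∈ Finset.range m, c l) * Complex.normSq P : ℝ) : ℂ) := by
          push_cast
          ring
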